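/- Let ω be a uniformly random vector in {1, i, -1, -i}ⁿ and for a ∈ ℂⁿ let a∘ω denote the entrywise product. Define Λ(b)² = ‖Re(b)‖₂²·‖Im(b)‖₂² − ⟨Re(b), Im(b)⟩² for b ∈ ℂⁿ. Then 4·E_ω[Λ(a∘ω)²] = ‖a‖₂⁴ − ‖a‖₄⁴. -/

import Mathlib

/-- `Λ(b)²` for `b ∈ ℂⁿ`: `‖Re b‖₂²·‖Im b‖₂² − ⟨Re b, Im b⟩²`. -/
noncomputable def lamSq {n : ℕ} (b : Fin n → ℂ) : ℝ :=
  (∑ i, (b i).re ^ 2) * (∑ i, (b i).im ^ 2) - (∑ i, (b i).re * (b i).im) ^ 2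

lemma key_prod {n : ℕ} (h : Fin n → ZMod 4 → ℝ) :
    ∑ ω : Fin n → ZMod 4, ∏ i, h i (ω i) = ∏ i, ∑ t, h i t := by
  rw [← Fintype.piFinset_univ, ← Finset.prod_univ_sum]

lemma eps_zmod4 : ∑ t : ZMod 4, ((-1:ℝ)^t.val) = 0 := by
  have : (∑ t : ZMod 4, ((-1:ℝ)^t.val)) = ∑ t : Fin 4, ((-1:ℝ)^t.val) := rfl
  rw [this]
  simp [Fin.sum_univ_succ]
  norm_num

lemma sum_eps {n : ℕ} (j k : Fin n) :
    ∑ ω : Fin n → ZMod 4, (-1:ℝ)^((ω j).val) * (-1:ℝ)^((ω k).val) =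
      if j = k then (4:ℝ)^n else 0 := by
  split_ifs with hjk
  · subst hjk
    have h1 : ∀ ω : Fin n → ZMod 4,
        (-1:ℝ)^((ω j).val) * (-1:ℝ)^((ω j).val) = 1 := by
      intro ω
      rw [← pow_add]
      exact Even.neg_one_pow ⟨(ω j).val, rfl⟩
    rw [Finset.sum_congr rfl (fun ω _ => h1 ω)]
    simp [Finset.card_univ, Fintype.card_fun]
  · have h1 : ∀ ω : Fin n → ZMod 4,
        (-1:ℝ)^((ω j).val) * (-1:ℝ)^((ω k).val) =
        ∏ i, ((if i = j then (-1:ℝ)^((ω i).val) else 1) *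
              (if i = k then (-1:ℝ)^((ω i).val) else 1)) := by
      intro ω
      rw [Finset.prod_mul_distrib, Finset.prod_ite_eq' Finset.univ j
        (fun i => (-1:ℝ)^((ω i).val)), Finset.prod_ite_eq' Finset.univ k
        (fun i => (-1:ℝ)^((ω i).val))]
      simp
    have h2 := key_prod (fun i t => (if i = j then (-1:ℝ)^t.val else 1) *
      (if i = k then (-1:ℝ)^t.val else 1))
    rw [Finset.sum_congr rfl (fun ω _ => h1 ω), h2]
    apply Finset.prod_eq_zero (Finset.mem_univ j)
    simp only [if_pos rfl, if_neg hjk, mul_one]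
    exact eps_zmod4

lemma expand_sq {n : ℕ} (x : Fin n → ℝ) :
    ∑ ω : Fin n → ZMod 4, (∑ j, (-1:ℝ)^((ω j).val) * x j)^2 =
      4^n * ∑ j, (x j)^2 := by
  have h1 : ∀ ω : Fin n → ZMod 4,
      (∑ j, (-1:ℝ)^((ω j).val) * x j)^2 =
      ∑ j, ∑ k, ((-1:ℝ)^((ω j).val) * (-1:ℝ)^((ω k).val)) * (x j * x k) := by
    intro ω
    rw [sq, Finset.sum_mul_sum]
    exact Finset.sum_congr rfl fun j _ => Finset.sum_congr rfl fun k _ => by ring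
  calc ∑ ω : Fin n → ZMod 4, (∑ j, (-1:ℝ)^((ω j).val) * x j)^2
      = ∑ ω : Fin n → ZMod 4, ∑ j, ∑ k,
          ((-1:ℝ)^((ω j).val) * (-1:ℝ)^((ω k).val)) * (x j * x k) :=
        Finset.sum_congr rfl fun ω _ => h1 ω
    _ = ∑ j, ∑ k, ∑ ω : Fin n → ZMod 4,
          ((-1:ℝ)^((ω j).val) * (-1:ℝ)^((ω k).val)) * (x j * x k) := by
        rw [Finset.sum_comm]
        exact Finset.sum_congr rfl fun j _ => Finset.sum_comm
    _ = ∑ j, ∑ k, (if j = k then (4:ℝ)^n else 0) * (x j * x k) := by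
        refine Finset.sum_congr rfl fun j _ => Finset.sum_congr rfl fun k _ => ?_
        rw [← Finset.sum_mul, sum_eps]
    _ = ∑ j, (4:ℝ)^n * (x j * x j) := by
        refine Finset.sum_congr rfl fun j _ => ?_
        simp only [ite_mul, zero_mul, Finset.sum_ite_eq, Finset.mem_univ, if_true]
    _ = 4^n * ∑ j, (x j)^2 := by
        rw [Finset.mul_sum]
        exact Finset.sum_congr rfl fun j _ => by ring

lemma pointwise {n : ℕ} (a : Fin n → ℂ) (ω : Fin n → ZMod 4) :
    lamSq (fun j => a j * Complex.I ^ ((ω j).val)) =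
      ((∑ j, Complex.normSq (a j))^2 -
        Complex.normSq (∑ j, ((-1:ℂ)^((ω j).val)) * (a j)^2)) / 4 := by
  set b : Fin n → ℂ := fun j => a j * Complex.I ^ ((ω j).val) with hb
  have hZ : (∑ j, ((-1:ℂ)^((ω j).val)) * (a j)^2) = ∑ j, (b j)^2 := by
    refine Finset.sum_congr rfl fun j _ => ?_
    rw [hb]
    simp only
    rw [mul_pow, ← pow_mul, mul_comm ((ω j).val) 2, pow_mul, Complex.I_sq]
    ring
  have hAB : (∑ j, Complex.normSq (a j)) = ∑ j, ((b j).re^2 + (b j).im^2) := by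
    refine Finset.sum_congr rfl fun j _ => ?_
    have : Complex.normSq (a j) = Complex.normSq (b j) := by
      rw [hb]
      simp only
      rw [Complex.normSq_mul, map_pow, Complex.normSq_I, one_pow, mul_one]
    rw [this, Complex.normSq_apply]
    ring
  have hRe : (∑ j, (b j)^2).re = ∑ j, ((b j).re^2 - (b j).im^2) := by
    rw [Complex.re_sum]
    refine Finset.sum_congr rfl fun j _ => ?_
    rw [sq, Complex.mul_re]
    ring
  have hIm : (∑ j, (b j)^2).im = ∑ j, (2 * ((b j).re * (b j).im)) := by
    rw [Complex.im_sum]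
    refine Finset.sum_congr rfl fun j _ => ?_
    rw [sq, Complex.mul_im]
    ring
  rw [hZ, Complex.normSq_apply, hRe, hIm, hAB, lamSq]
  rw [Finset.sum_add_distrib, Finset.sum_sub_distrib, ← Finset.mul_sum]
  ring

/-- For `ω` uniform on `{1,i,-1,-i}ⁿ` (modelled as `ω : Fin n → ZMod 4`, entries `i^(ω j)`),
`4·E_ω[Λ(a∘ω)²] = ‖a‖₂⁴ − ‖a‖₄⁴`. -/
theorem stmt3 {n : ℕ} (a : Fin n → ℂ) :
    4 * ((∑ ω : Fin n → ZMod 4,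
        lamSq (fun j => a j * Complex.I ^ ((ω j).val))) / 4 ^ n) =
      (∑ j, ‖a j‖ ^ 2) ^ 2 - ∑ j, ‖a j‖ ^ 4 := by
  have hcast : ∀ m : ℕ, ((-1:ℂ))^m = (((-1:ℝ)^m : ℝ) : ℂ) := by
    intro m; push_cast; ring
  have hNorm : ∑ ω : Fin n → ZMod 4,
      Complex.normSq (∑ j, ((-1:ℂ)^((ω j).val)) * (a j)^2) =
      4^n * ∑ j, (Complex.normSq (a j))^2 := by
    have h1 : ∀ ω : Fin n → ZMod 4,
        Complex.normSq (∑ j, ((-1:ℂ)^((ω j).val)) * (a j)^2) =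
        (∑ j, (-1:ℝ)^((ω j).val) * ((a j)^2).re)^2 +
        (∑ j, (-1:ℝ)^((ω j).val) * ((a j)^2).im)^2 := by
      intro ω
      rw [Complex.normSq_apply, Complex.re_sum, Complex.im_sum]
      congr 1
      · rw [sq]
        congr 1 <;> exact Finset.sum_congr rfl fun j _ => by
          rw [hcast, Complex.re_ofReal_mul]
      · rw [sq]
        congr 1 <;> exact Finset.sum_congr rfl fun j _ => by
          rw [hcast, Complex.im_ofReal_mul]
    rw [Finset.sum_congr rfl (fun ω _ => h1 ω), Finset.sum_add_distrib,
      expand_sq, expand_sq, ← mul_add, ← Finset.sum_add_distrib]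
    congr 1
    refine Finset.sum_congr rfl fun j _ => ?_
    rw [← map_pow, Complex.normSq_apply]
    ring
  have hS : ∑ ω : Fin n → ZMod 4,
      lamSq (fun j => a j * Complex.I ^ ((ω j).val)) =
      (4:ℝ)^n * ((∑ j, Complex.normSq (a j))^2 - ∑ j, (Complex.normSq (a j))^2) / 4 := by
    rw [Finset.sum_congr rfl (fun ω _ => pointwise a ω), ← Finset.sum_div,
      Finset.sum_sub_distrib, hNorm, Finset.sum_const, Finset.card_univ,
      Fintype.card_fun, ZMod.card, Fintype.card_fin, nsmul_eq_mul]
    push_cast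
    ring
  have h4 : ((4:ℝ)^n) ≠ 0 := by positivity
  rw [hS]
  have habs2 : ∀ j, ‖a j‖ ^ 2 = Complex.normSq (a j) := fun j =>
    Complex.sq_norm (a j)
  have habs4 : ∀ j, ‖a j‖ ^ 4 = (Complex.normSq (a j))^2 := by
    intro j
    rw [show (4:ℕ) = 2*2 from rfl, pow_mul, Complex.sq_norm]
  rw [Finset.sum_congr rfl (fun j _ => habs2 j),
    Finset.sum_congr rfl (fun j _ => habs4 j)]
  field_simp
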